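/- arXiv:2206.03466 — 4 statements merged into one kernel-verified Lean document; each statement's English description precedes it below -/
import Mathlib

section
/- Let θ = (w_1,...,w_k,a_1,...,a_k) be a Karush–Kuhn–Tucker point of the maximum-margin problem for a two-layer ReLU network on an orthogonally separable dataset in which both classes are nonempty; explicitly, assume: (feasibility) y_i N_θ(x_i) ≥ 1 for all i ∈ [n]; and there exist λ_1,...,λ_n ≥ 0 and numbers ψ'_{i,j} ∈ [0,1] with ψ'_{i,j} = 0 if w_j^T x_i < 0 and ψ'_{i,j} = 1 if w_j^T x_i > 0, such that (equilibrium) w_j = a_j Σ_{i=1}^n λ_i y_i ψ'_{i,j} x_i and a_j = Σ_{i=1}^n λ_i y_i ψ(w_j^T x_i) for all j ∈ [k], and (complementary slackness) λ_i = 0 whenever y_i N_θ(x_i) ≠ 1. Then for all j ∈ [k] one has |a_j| = ‖w_j‖, and whenever a_j ≠ 0, w_j/‖w_j‖ = v_{sgn(a_j)} / ( Σ_{j' : sgn(a_{j'}) = sgn(a_j)} a_{j'}² ). -/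
open Finset

/-- Euclidean inner product of real vectors. -/
noncomputable def dotp {m : ℕ} (u v : Fin m → ℝ) : ℝ := ∑ i, u i * v i

/-- Euclidean norm of a real vector. -/
noncomputable def norm2 {m : ℕ} (v : Fin m → ℝ) : ℝ := Real.sqrt (∑ i, v i ^ 2)

/-- The ReLU function `ψ(u) = max{u, 0}`. -/
noncomputable def relu (u : ℝ) : ℝ := max u 0

/-- The two-layer ReLU network `N_θ(z) = Σ_j a_j ψ(w_jᵀ z)`. -/
noncomputable def net {d k : ℕ} (w : Fin k → Fin d → ℝ) (a : Fin k → ℝ)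
    (z : Fin d → ℝ) : ℝ :=
  ∑ j, a j * relu (dotp (w j) z)

/-- Any Karush–Kuhn–Tucker point `θ = (w, a)` of the maximum-margin problem for a
two-layer ReLU network on an orthogonally separable dataset with both classes nonempty satisfies
`|a_j| = ‖w_j‖` for all `j`, and whenever `a_j ≠ 0`,
`w_j / ‖w_j‖ = v_{sgn(a_j)} / (Σ_{j' : sgn(a_{j'}) = sgn(a_j)} a_{j'}²)`,
where `v_s` is the maximum-margin vector of class `s`. -/
theorem kkt_point_structure
    (d n k : ℕ) (x : Fin n → Fin d → ℝ) (y : Fin n → ℝ)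
    (hy : ∀ i, y i = 1 ∨ y i = -1)
    (hsep1 : ∀ i i', y i = y i' → 0 < dotp (x i) (x i'))
    (hsep2 : ∀ i i', y i ≠ y i' → dotp (x i) (x i') ≤ 0)
    (hpos : ∃ i, y i = 1) (hneg : ∃ i, y i = -1)
    (v : ℝ → Fin d → ℝ)
    (hvfeas : ∀ s : ℝ, s = 1 ∨ s = -1 → ∀ i, y i = s → 1 ≤ dotp (v s) (x i))
    (hvmin : ∀ s : ℝ, s = 1 ∨ s = -1 → ∀ u : Fin d → ℝ,
      (∀ i, y i = s → 1 ≤ dotp u (x i)) → norm2 (v s) ≤ norm2 u)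
    (w : Fin k → Fin d → ℝ) (a : Fin k → ℝ)
    (hfeas : ∀ i, 1 ≤ y i * net w a (x i))
    (lam : Fin n → ℝ) (hlam : ∀ i, 0 ≤ lam i)
    (ψ' : Fin n → Fin k → ℝ)
    (hψ01 : ∀ i j, 0 ≤ ψ' i j ∧ ψ' i j ≤ 1)
    (hψ0 : ∀ i j, dotp (w j) (x i) < 0 → ψ' i j = 0)
    (hψ1 : ∀ i j, 0 < dotp (w j) (x i) → ψ' i j = 1)
    (heqw : ∀ j ic, w j ic = a j * ∑ i, lam i * y i * ψ' i j * x i ic)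
    (heqa : ∀ j, a j = ∑ i, lam i * y i * relu (dotp (w j) (x i)))
    (hcs : ∀ i, y i * net w a (x i) ≠ 1 → lam i = 0) :
    ∀ j, |a j| = norm2 (w j) ∧
      (a j ≠ 0 → ∀ ic, w j ic / norm2 (w j) =
        v (Real.sign (a j)) ic /
          (∑ j' ∈ Finset.univ.filter (fun j'' => Real.sign (a j'') = Real.sign (a j)),
            (a j') ^ 2)) := by
  classical
  have dcomm : ∀ (p q : Fin d → ℝ), dotp p q = dotp q p := fun p q =>
    Finset.sum_congr rfl fun i _ => mul_comm _ _
  have hψrel : ∀ i j, ψ' i j * dotp (w j) (x i) = relu (dotp (w j) (x i)) := by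
    intro i j
    rcases lt_trichotomy (dotp (w j) (x i)) 0 with h | h | h
    · rw [hψ0 i j h]; unfold relu; rw [max_eq_right h.le, zero_mul]
    · rw [h]; unfold relu; simp
    · rw [hψ1 i j h]; unfold relu; rw [max_eq_left h.le, one_mul]
  have hdotw : ∀ j (z : Fin d → ℝ),
      dotp (w j) z = a j * ∑ i, lam i * y i * ψ' i j * dotp (x i) z := by
    intro j z
    unfold dotp
    calc (∑ ic, w j ic * z ic)
        = ∑ ic, ∑ i, a j * (lam i * y i * ψ' i j * (x i ic * z ic)) := by
          refine Finset.sum_congr rfl fun ic _ => ?_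
          rw [heqw, Finset.mul_sum, Finset.sum_mul]
          exact Finset.sum_congr rfl fun i _ => by ring
      _ = ∑ i, ∑ ic, a j * (lam i * y i * ψ' i j * (x i ic * z ic)) := Finset.sum_comm
      _ = a j * ∑ i, lam i * y i * ψ' i j * ∑ ic, x i ic * z ic := by
          simp only [Finset.mul_sum]
  have hww : ∀ j, dotp (w j) (w j) = a j * a j := by
    intro j
    rw [hdotw j (w j)]
    have h1 : ∀ i, lam i * y i * ψ' i j * dotp (x i) (w j)
        = lam i * y i * relu (dotp (w j) (x i)) := fun i => by
      rw [dcomm, ← hψrel]; ring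
    rw [Finset.sum_congr rfl (fun i _ => h1 i), ← heqa]
  have hnorm : ∀ j, norm2 (w j) = |a j| := by
    intro j
    unfold norm2
    have h2 : (∑ ic, w j ic ^ 2) = a j ^ 2 := by
      have h3 : (∑ ic, w j ic ^ 2) = dotp (w j) (w j) := by
        unfold dotp; exact Finset.sum_congr rfl fun ic _ => pow_two _
      rw [h3, hww j, ← pow_two]
    rw [h2, Real.sqrt_sq_eq_abs]
  have hεa : ∀ j, a j ≠ 0 → Real.sign (a j) * a j = |a j| := by
    intro j h
    rcases h.lt_or_gt with h' | h'
    · rw [Real.sign_of_neg h', abs_of_neg h']; ring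
    · rw [Real.sign_of_pos h', abs_of_pos h']; ring
  have hsgn : ∀ j, a j ≠ 0 → Real.sign (a j) = 1 ∨ Real.sign (a j) = -1 := by
    intro j h
    rcases h.lt_or_gt with h' | h'
    · right; exact Real.sign_of_neg h'
    · left; exact Real.sign_of_pos h'
  have claim1 : ∀ j, a j ≠ 0 → ∀ i, y i ≠ Real.sign (a j) → lam i * ψ' i j = 0 := by
    intro j ha i hyi
    by_contra hne
    have hlp : 0 < lam i * ψ' i j :=
      lt_of_le_of_ne (mul_nonneg (hlam i) (hψ01 i j).1) (Ne.symm hne)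
    have hd : dotp (w j) (x i) < 0 := by
      rw [hdotw j (x i)]
      rcases ha.lt_or_gt with ha' | ha'
      · -- a j < 0, sign = -1, y i ≠ -1 so y i = 1
        have hε : Real.sign (a j) = -1 := Real.sign_of_neg ha'
        rw [hε] at hyi
        have hyi1 : y i = 1 := (hy i).resolve_right hyi
        have hS : 0 < ∑ i', lam i' * y i' * ψ' i' j * dotp (x i') (x i) := by
          have hle : ∀ i' ∈ (univ : Finset (Fin n)), (0:ℝ) ≤
              lam i' * y i' * ψ' i' j * dotp (x i') (x i) := by
            intro i' _
            have hnn := mul_nonneg (hlam i') (hψ01 i' j).1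
            rcases hy i' with hy' | hy' <;> rw [hy']
            · have hdp : 0 < dotp (x i') (x i) := hsep1 i' i (by rw [hy', hyi1])
              nlinarith
            · have hdp : dotp (x i') (x i) ≤ 0 := hsep2 i' i (by rw [hy', hyi1]; norm_num)
              nlinarith
          have hst : 0 < lam i * y i * ψ' i j * dotp (x i) (x i) := by
            have hdp : 0 < dotp (x i) (x i) := hsep1 i i rfl
            rw [hyi1]; nlinarith
          calc (0:ℝ) = ∑ _i' : Fin n, (0:ℝ) := by simp
            _ < _ := Finset.sum_lt_sum hle ⟨i, Finset.mem_univ i, hst⟩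
        nlinarith
      · -- a j > 0, sign = 1, y i ≠ 1 so y i = -1
        have hε : Real.sign (a j) = 1 := Real.sign_of_pos ha'
        rw [hε] at hyi
        have hyi1 : y i = -1 := (hy i).resolve_left hyi
        have hS : (∑ i', lam i' * y i' * ψ' i' j * dotp (x i') (x i)) < 0 := by
          have hle : ∀ i' ∈ (univ : Finset (Fin n)),
              lam i' * y i' * ψ' i' j * dotp (x i') (x i) ≤ 0 := by
            intro i' _
            have hnn := mul_nonneg (hlam i') (hψ01 i' j).1
            rcases hy i' with hy' | hy' <;> rw [hy']
            · have hdp : dotp (x i') (x i) ≤ 0 := hsep2 i' i (by rw [hy', hyi1]; norm_num)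
              nlinarith
            · have hdp : 0 < dotp (x i') (x i) := hsep1 i' i (by rw [hy', hyi1])
              nlinarith
          have hst : lam i * y i * ψ' i j * dotp (x i) (x i) < 0 := by
            have hdp : 0 < dotp (x i) (x i) := hsep1 i i rfl
            rw [hyi1]; nlinarith
          calc (∑ i', lam i' * y i' * ψ' i' j * dotp (x i') (x i))
              < ∑ _i' : Fin n, (0:ℝ) :=
                Finset.sum_lt_sum hle ⟨i, Finset.mem_univ i, hst⟩
            _ = 0 := by simp
        nlinarith
    exact hne (by rw [hψ0 i j hd, mul_zero])
  have hdotite : ∀ j, a j ≠ 0 → ∀ z : Fin d → ℝ, dotp (w j) z =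
      |a j| * ∑ i, (if y i = Real.sign (a j) then lam i * ψ' i j * dotp (x i) z else 0) := by
    intro j ha z
    rw [hdotw j z, Finset.mul_sum, Finset.mul_sum]
    refine Finset.sum_congr rfl fun i _ => ?_
    by_cases h : y i = Real.sign (a j)
    · rw [if_pos h, h]
      linear_combination (lam i * ψ' i j * dotp (x i) z) * hεa j ha
    · rw [if_neg h, mul_zero]
      linear_combination (a j * y i * dotp (x i) z) * claim1 j ha i h
  have hact : ∀ j, a j ≠ 0 → ∀ i, (y i = Real.sign (a j) → 0 < dotp (w j) (x i)) ∧
      (y i ≠ Real.sign (a j) → dotp (w j) (x i) ≤ 0) := by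
    intro j ha
    have habs : 0 < |a j| := abs_pos.mpr ha
    have hex : ∃ i0, y i0 = Real.sign (a j) ∧ 0 < lam i0 * ψ' i0 j := by
      by_contra hno
      push_neg at hno
      have hz : dotp (w j) (w j) = 0 := by
        rw [hdotite j ha (w j), Finset.sum_eq_zero, mul_zero]
        intro i' _
        by_cases h : y i' = Real.sign (a j)
        · rw [if_pos h]
          have h1 : lam i' * ψ' i' j = 0 :=
            le_antisymm (hno i' h) (mul_nonneg (hlam i') (hψ01 i' j).1)
          rw [h1, zero_mul]
        · rw [if_neg h]
      rw [hww j] at hz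
      exact ha (by nlinarith)
    obtain ⟨i0, hy0, hl0⟩ := hex
    intro i
    constructor
    · intro hyi
      rw [hdotite j ha (x i)]
      refine mul_pos habs ?_
      refine Finset.sum_pos' ?_ ⟨i0, Finset.mem_univ i0, ?_⟩
      · intro i' _
        by_cases h : y i' = Real.sign (a j)
        · rw [if_pos h]
          have hdp : 0 < dotp (x i') (x i) := hsep1 i' i (by rw [h, hyi])
          exact mul_nonneg (mul_nonneg (hlam i') (hψ01 i' j).1) hdp.le
        · rw [if_neg h]
      · rw [if_pos hy0]
        exact mul_pos hl0 (hsep1 i0 i (by rw [hy0, hyi]))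
    · intro hyi
      rw [hdotite j ha (x i)]
      have hs : (∑ i', if y i' = Real.sign (a j) then
          lam i' * ψ' i' j * dotp (x i') (x i) else 0) ≤ 0 := by
        refine Finset.sum_nonpos fun i' _ => ?_
        by_cases h : y i' = Real.sign (a j)
        · rw [if_pos h]
          have hdp : dotp (x i') (x i) ≤ 0 := hsep2 i' i (by rw [h]; exact fun hh => hyi hh.symm)
          have hnn := mul_nonneg (hlam i') (hψ01 i' j).1
          nlinarith
        · rw [if_neg h]
      nlinarith
  have hψone : ∀ j, a j ≠ 0 → ∀ i, y i = Real.sign (a j) → ψ' i j = 1 :=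
    fun j ha i h => hψ1 i j (((hact j ha i).1) h)
  have hwu : ∀ j, a j ≠ 0 → ∀ ic, w j ic =
      |a j| * ∑ i, (if y i = Real.sign (a j) then lam i * x i ic else 0) := by
    intro j ha ic
    rw [heqw, Finset.mul_sum, Finset.mul_sum]
    refine Finset.sum_congr rfl fun i _ => ?_
    by_cases h : y i = Real.sign (a j)
    · rw [if_pos h, h, hψone j ha i h]
      linear_combination (lam i * x i ic) * hεa j ha
    · rw [if_neg h, mul_zero]
      linear_combination (a j * y i * x i ic) * claim1 j ha i h
  intro j
  refine ⟨(hnorm j).symm, ?_⟩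
  intro ha ic
  set s := Real.sign (a j) with hs_def
  have hscases : s = 1 ∨ s = -1 := by rw [hs_def]; exact hsgn j ha
  set U : Fin d → ℝ := fun ic => ∑ i, (if y i = s then lam i * x i ic else 0) with hU
  set Av : ℝ := ∑ j' ∈ Finset.univ.filter (fun j'' => Real.sign (a j'') = s), a j' ^ 2 with hAv
  have hUdot : ∀ z : Fin d → ℝ, dotp U z = ∑ i, (if y i = s then lam i * dotp (x i) z else 0) := by
    intro z
    unfold dotp
    calc (∑ ic, U ic * z ic)
        = ∑ ic, ∑ i, (if y i = s then lam i * (x i ic * z ic) else 0) := by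
          refine Finset.sum_congr rfl fun ic' _ => ?_
          rw [hU]
          simp only
          rw [Finset.sum_mul]
          refine Finset.sum_congr rfl fun i _ => ?_
          by_cases h : y i = s
          · rw [if_pos h, if_pos h]; ring
          · rw [if_neg h, if_neg h, zero_mul]
      _ = ∑ i, ∑ ic, (if y i = s then lam i * (x i ic * z ic) else 0) := Finset.sum_comm
      _ = ∑ i, (if y i = s then lam i * ∑ ic, x i ic * z ic else 0) := by
          refine Finset.sum_congr rfl fun i _ => ?_
          by_cases h : y i = s
          · simp only [if_pos h, Finset.mul_sum]
          · simp only [if_neg h, Finset.sum_const_zero]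
  have hwU : ∀ j', Real.sign (a j') = s → a j' ≠ 0 → ∀ z : Fin d → ℝ,
      dotp (w j') z = |a j'| * dotp U z := by
    intro j' hsj ha' z
    rw [hdotite j' ha' z, hUdot z]
    congr 1
    refine Finset.sum_congr rfl fun i _ => ?_
    rw [hsj]
    by_cases h : y i = s
    · rw [if_pos h, if_pos h, hψone j' ha' i (h.trans hsj.symm)]
      ring
    · rw [if_neg h, if_neg h]
  have hnet_s : ∀ i, y i = s → y i * net w a (x i) = Av * dotp U (x i) := by
    intro i hyi
    have hterm : ∀ j', a j' * relu (dotp (w j') (x i)) =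
        (if Real.sign (a j') = s then a j' ^ 2 * (s * dotp U (x i)) else 0) := by
      intro j'
      by_cases hsj : Real.sign (a j') = s
      · rw [if_pos hsj]
        have ha' : a j' ≠ 0 := by
          intro h0
          rw [h0, Real.sign_zero] at hsj
          rcases hscases with h | h <;> rw [h] at hsj <;> norm_num at hsj
        have hdpos : 0 < dotp (w j') (x i) := (hact j' ha' i).1 (by rw [hyi, ← hsj])
        have hrelu : relu (dotp (w j') (x i)) = dotp (w j') (x i) := by
          unfold relu; exact max_eq_left hdpos.le
        rw [hrelu, hwU j' hsj ha' (x i)]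
        have h2 := hεa j' ha'
        rw [hsj] at h2
        linear_combination (- (a j' * dotp U (x i))) * h2
      · rw [if_neg hsj]
        by_cases ha' : a j' = 0
        · rw [ha', zero_mul]
        · have hdle : dotp (w j') (x i) ≤ 0 :=
            (hact j' ha' i).2 (by rw [hyi]; exact fun hh => hsj hh.symm)
          have hrelu : relu (dotp (w j') (x i)) = 0 := by
            unfold relu; exact max_eq_right hdle
          rw [hrelu, mul_zero]
    have hss : s * s = 1 := by rcases hscases with h | h <;> rw [h] <;> norm_num
    have hnet1 : net w a (x i) = Av * (s * dotp U (x i)) := by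
      unfold net
      rw [Finset.sum_congr rfl fun j' _ => hterm j', ← Finset.sum_filter, ← Finset.sum_mul, hAv]
    rw [hnet1, hyi]
    linear_combination (Av * dotp U (x i)) * hss
  have hξdot : ∀ z : Fin d → ℝ, dotp (fun ic => Av * U ic) z = Av * dotp U z := by
    intro z
    unfold dotp
    rw [Finset.mul_sum]
    exact Finset.sum_congr rfl fun ic' _ => by ring
  have hAnn : (0:ℝ) ≤ Av := by
    rw [hAv]; exact Finset.sum_nonneg fun _ _ => sq_nonneg _
  have hApos : (0:ℝ) < Av := by
    have hj : j ∈ Finset.univ.filter (fun j'' => Real.sign (a j'') = s) :=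
      Finset.mem_filter.mpr ⟨Finset.mem_univ j, hs_def.symm⟩
    have h1 : a j ^ 2 ≤ Av := by
      rw [hAv]
      exact Finset.single_le_sum (f := fun j' => a j' ^ 2) (fun _ _ => sq_nonneg _) hj
    have h2 : (0:ℝ) < a j ^ 2 := by positivity
    linarith
  have hfeasξ : ∀ i, y i = s → 1 ≤ dotp (fun ic => Av * U ic) (x i) := by
    intro i hyi
    rw [hξdot, ← hnet_s i hyi]
    exact hfeas i
  have hslack : ∀ i, y i = s → lam i ≠ 0 → dotp (fun ic => Av * U ic) (x i) = 1 := by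
    intro i hyi hl
    rw [hξdot, ← hnet_s i hyi]
    by_contra hne
    exact hl (hcs i hne)
  have hXX : dotp (fun ic => Av * U ic) (fun ic => Av * U ic) ≤
      dotp (fun ic => Av * U ic) (v s) := by
    have e1 : ∀ z : Fin d → ℝ, dotp (fun ic => Av * U ic) z =
        ∑ i, (if y i = s then Av * lam i * dotp (x i) z else 0) := by
      intro z
      rw [hξdot, hUdot z, Finset.mul_sum]
      refine Finset.sum_congr rfl fun i _ => ?_
      by_cases h : y i = s
      · rw [if_pos h, if_pos h]; ring
      · rw [if_neg h, if_neg h, mul_zero]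
    rw [e1, e1]
    refine Finset.sum_le_sum fun i _ => ?_
    by_cases h : y i = s
    · rw [if_pos h, if_pos h]
      by_cases hl : lam i = 0
      · rw [hl]; simp
      · have h1 : dotp (x i) (fun ic => Av * U ic) = 1 := by
          rw [dcomm]; exact hslack i h hl
        have h2 : 1 ≤ dotp (x i) (v s) := by
          rw [dcomm]; exact hvfeas s hscases i h
        rw [h1]
        have h3 := mul_nonneg hAnn (hlam i)
        nlinarith
    · rw [if_neg h, if_neg h]
  have hsum1 : (∑ ic', (Av * U ic') * (Av * U ic')) ≤ ∑ ic', (Av * U ic') * v s ic' := by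
    have h1 : dotp (fun ic => Av * U ic) (fun ic => Av * U ic) =
        ∑ ic', (Av * U ic') * (Av * U ic') := rfl
    have h2 : dotp (fun ic => Av * U ic) (v s) = ∑ ic', (Av * U ic') * v s ic' := rfl
    rw [h1, h2] at hXX
    exact hXX
  have hnormle : (∑ ic', v s ic' ^ 2) ≤ ∑ ic', (Av * U ic') ^ 2 := by
    have h1 := hvmin s hscases (fun ic => Av * U ic) hfeasξ
    simp only [norm2] at h1
    have h2 : (0:ℝ) ≤ ∑ ic', (Av * U ic') ^ 2 := Finset.sum_nonneg fun _ _ => sq_nonneg _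
    have h3 : (0:ℝ) ≤ ∑ ic', v s ic' ^ 2 := Finset.sum_nonneg fun _ _ => sq_nonneg _
    calc (∑ ic', v s ic' ^ 2) = Real.sqrt (∑ ic', v s ic' ^ 2) ^ 2 := (Real.sq_sqrt h3).symm
      _ ≤ Real.sqrt (∑ ic', (Av * U ic') ^ 2) ^ 2 := pow_le_pow_left₀ (Real.sqrt_nonneg _) h1 2
      _ = _ := Real.sq_sqrt h2
  have hveq : ∀ ic', Av * U ic' = v s ic' := by
    have key : (∑ ic', (Av * U ic' - v s ic') ^ 2) ≤ 0 := by
      have e : (∑ ic', (Av * U ic' - v s ic') ^ 2) =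
          (∑ ic', (Av * U ic') * (Av * U ic')) - 2 * (∑ ic', (Av * U ic') * v s ic')
            + ∑ ic', v s ic' ^ 2 := by
        rw [Finset.mul_sum, ← Finset.sum_sub_distrib, ← Finset.sum_add_distrib]
        exact Finset.sum_congr rfl fun ic' _ => by ring
      have h6 : (∑ ic', (Av * U ic') ^ 2) = ∑ ic', (Av * U ic') * (Av * U ic') :=
        Finset.sum_congr rfl fun ic' _ => pow_two _
      rw [e]
      rw [h6] at hnormle
      linarith
    intro ic'
    have h0 : ∀ ic'' ∈ (Finset.univ : Finset (Fin d)), (0:ℝ) ≤ (Av * U ic'' - v s ic'') ^ 2 :=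
      fun _ _ => sq_nonneg _
    have hz := (Finset.sum_eq_zero_iff_of_nonneg h0).mp
      (le_antisymm key (Finset.sum_nonneg h0)) ic' (Finset.mem_univ ic')
    have h7 : Av * U ic' - v s ic' = 0 := sq_eq_zero_iff.mp hz
    linarith
  rw [hnorm j]
  have h1 : w j ic = |a j| * U ic := by
    rw [hwu j ha ic, ← hs_def, hU]
  have h2 : v s ic = Av * U ic := (hveq ic).symm
  rw [h1, h2, mul_div_cancel_left₀ _ (ne_of_gt (abs_pos.mpr ha)),
    mul_div_cancel_left₀ _ (ne_of_gt hApos)]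
end

section
/- Let v_1, v_{-1} ∈ ℝ^d with v_1 ≠ v_{-1}, and consider the network N(z) = ψ(v_1^T z) − ψ(v_{-1}^T z), where ψ(u) = max{u,0}. Let m ∈ {±1}, let D be a (φ, ρ, τ)-Bernoulli distribution with m·cos ∠(v_1 − v_{-1}, φ) < 0, and let p ∈ ℝ^d be arbitrary. Then P_{(x,y)∼D}{ m·y·N(p + x) > 0 } ≤ 1/2 + (1/2)·exp( −2dτ²·cos² ∠(v_1 − v_{-1}, φ) ). -/
open MeasureTheory Finset

/-- The `(φ, ρ, τ)`-Bernoulli distribution on `ρHᵈ × {±1}`: draw `y` uniformly from `{±1}`, then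
sample `x` by taking `yρφ` and flipping the sign of each coordinate independently with
probability `1/2 − τ`. -/
noncomputable def bernoulliModel (d : ℕ) (φ : Fin d → ℝ) (ρ τ : ℝ) :
    Measure ((Fin d → ℝ) × ℝ) :=
  ∑ yb : Bool, ∑ s : Fin d → Bool,
    (ENNReal.ofReal ((1 / 2) * ∏ i, (if s i then 1 / 2 - τ else 1 / 2 + τ))) •
      Measure.dirac
        ((fun i => (if s i then (-1 : ℝ) else 1) * (if yb then (1 : ℝ) else -1) * ρ * φ i),
          (if yb then (1 : ℝ) else -1))

lemma hoeff_aux (p q : ℝ) (hp : 0 ≤ p) (hq : 0 ≤ q) (hpq : p + q = 1) (v : ℝ) :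
    p * Real.exp (q * v) + q * Real.exp (-(p * v)) ≤ Real.exp (v ^ 2 / 8) := by
  have hexp : (1:ℝ) ≤ Real.exp (v ^ 2 / 8) := Real.one_le_exp (by positivity)
  rcases eq_or_lt_of_le hp with hp0 | hp0
  · have hq1 : q = 1 := by linarith
    simp only [← hp0, hq1, zero_mul, one_mul, neg_zero, Real.exp_zero, mul_one]
    simpa using hexp
  rcases eq_or_lt_of_le hq with hq0 | hq0
  · have hp1 : p = 1 := by linarith
    simp only [← hq0, hp1, zero_mul, one_mul, neg_zero, Real.exp_zero, mul_one]
    simpa using hexp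
  -- main case
  set A : ℝ → ℝ := fun v => Real.exp (q * v) with hA
  set B : ℝ → ℝ := fun v => Real.exp (-(p * v)) with hB
  set G : ℝ → ℝ := fun v => p * A v + q * B v with hG
  have hGpos : ∀ v, 0 < G v := fun v => by positivity
  have hderivG : ∀ v, HasDerivAt G (p * q * (A v - B v)) v := by
    intro v
    have h1 : HasDerivAt A (q * A v) v := by
      simpa [hA, mul_comm, Function.comp_def] using (Real.hasDerivAt_exp (q*v)).comp v ((hasDerivAt_id v).const_mul q)
    have h2 : HasDerivAt B (-p * B v) v := by
      simpa [hB, mul_comm, Function.comp_def] using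
        (Real.hasDerivAt_exp (-(p*v))).comp v (((hasDerivAt_id v).const_mul p).neg)
    have := (h1.const_mul p).add (h2.const_mul q)
    refine this.congr_deriv ?_
    ring
  set f1 : ℝ → ℝ := fun v => v / 4 - p * q * (A v - B v) / G v with hf1
  have hderivf1 : ∀ v, HasDerivAt f1 (1/4 - p * q * (A v * B v) / (G v)^2) v := by
    intro v
    have h1 : HasDerivAt A (q * A v) v := by
      simpa [hA, mul_comm, Function.comp_def] using (Real.hasDerivAt_exp (q*v)).comp v ((hasDerivAt_id v).const_mul q)
    have h2 : HasDerivAt B (-p * B v) v := by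
      simpa [hB, mul_comm, Function.comp_def] using
        (Real.hasDerivAt_exp (-(p*v))).comp v (((hasDerivAt_id v).const_mul p).neg)
    have hnum : HasDerivAt (fun v => p * q * (A v - B v)) (p * q * (q * A v + p * B v)) v := by
      have := (h1.sub h2).const_mul (p*q)
      refine this.congr_deriv ?_; ring
    have hdiv := hnum.div (hderivG v) (hGpos v).ne'
    have hq1 : q = 1 - p := by linarith
    have := ((hasDerivAt_id v).div_const 4).sub hdiv
    refine this.congr_deriv ?_
    rw [div_sub_div _ _ (by norm_num : (4:ℝ) ≠ 0) (by positivity : (G v)^2 ≠ 0)]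
    rw [div_sub_div _ _ (by norm_num : (4:ℝ) ≠ 0) (by positivity : (G v)^2 ≠ 0)]
    congr 1
    subst hq1
    ring
  have hmono1 : Monotone f1 := by
    apply monotone_of_deriv_nonneg
    · exact fun v => (hderivf1 v).differentiableAt
    · intro v
      rw [(hderivf1 v).deriv]
      have hAB : 0 < A v * B v := by positivity
      rw [sub_nonneg, div_le_iff₀ (by positivity : (0:ℝ) < (G v)^2)]
      show p * q * (A v * B v) ≤ 1/4 * (p * A v + q * B v)^2
      nlinarith [sq_nonneg (p * A v - q * B v), hAB, hp0, hq0]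
  have hf10 : f1 0 = 0 := by simp [hf1, hA, hB]
  set f : ℝ → ℝ := fun v => v^2/8 - Real.log (G v) with hf
  have hderivf : ∀ v, HasDerivAt f (f1 v) v := by
    intro v
    have hlog : HasDerivAt (fun v => Real.log (G v)) (p * q * (A v - B v) / G v) v :=
      (hderivG v).log (hGpos v).ne'
    have hsq : HasDerivAt (fun v : ℝ => v^2/8) (v/4) v := by
      have := (hasDerivAt_pow 2 v).div_const 8
      refine this.congr_deriv ?_; ring
    exact hsq.sub hlog
  have hf0 : f 0 = 0 := by simp [hf, hG, hA, hB, hpq]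
  have hfv : 0 ≤ f v := by
    rcases le_total 0 v with hv | hv
    · have hmf : MonotoneOn f (Set.Ici 0) := by
        apply monotoneOn_of_deriv_nonneg (convex_Ici 0)
          (fun x _ => (hderivf x).differentiableAt.continuousAt.continuousWithinAt)
          (fun x _ => ((hderivf x).differentiableAt).differentiableWithinAt)
        intro x hx
        rw [(hderivf x).deriv]
        have : f1 0 ≤ f1 x := hmono1 (le_of_lt (by simpa using hx))
        linarith [hf10 ▸ this]
      have := hmf (Set.self_mem_Ici) (by exact hv) hv
      linarith [hf0 ▸ this]
    · have hmf : AntitoneOn f (Set.Iic 0) := by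
        apply antitoneOn_of_deriv_nonpos (convex_Iic 0)
          (fun x _ => (hderivf x).differentiableAt.continuousAt.continuousWithinAt)
          (fun x _ => ((hderivf x).differentiableAt).differentiableWithinAt)
        intro x hx
        rw [(hderivf x).deriv]
        have : f1 x ≤ f1 0 := hmono1 (le_of_lt (by simpa using hx))
        linarith [hf10 ▸ this]
      have := hmf (by exact hv) (Set.self_mem_Iic) hv
      linarith [hf0 ▸ this]
  have hlogle : Real.log (G v) ≤ v^2/8 := by
    have h := hfv
    simp only [hf] at h
    linarith
  calc p * Real.exp (q*v) + q * Real.exp (-(p*v)) = G v := rfl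
    _ = Real.exp (Real.log (G v)) := (Real.exp_log (hGpos v)).symm
    _ ≤ Real.exp (v^2/8) := Real.exp_le_exp.mpr hlogle

lemma hoeff_step (τ u : ℝ) (hτ0 : 0 ≤ τ) (hτ : τ ≤ 1/2) :
    (1/2 - τ) * Real.exp (-u) + (1/2 + τ) * Real.exp u ≤
      Real.exp (2 * τ * u + u ^ 2 / 2) := by
  have h := hoeff_aux (1/2+τ) (1/2-τ) (by linarith) (by linarith) (by ring) (2*u)
  have h2 := mul_le_mul_of_nonneg_right h (Real.exp_pos (2*τ*u)).le
  have expand : ((1/2+τ) * Real.exp ((1/2-τ)*(2*u)) + (1/2-τ) * Real.exp (-((1/2+τ)*(2*u))))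
      * Real.exp (2*τ*u)
      = (1/2+τ) * Real.exp ((1/2-τ)*(2*u) + 2*τ*u)
        + (1/2-τ) * Real.exp (-((1/2+τ)*(2*u)) + 2*τ*u) := by
    rw [Real.exp_add, Real.exp_add]; ring
  have harg1 : (1/2-τ)*(2*u) + 2*τ*u = u := by ring
  have harg2 : -((1/2+τ)*(2*u)) + 2*τ*u = -u := by ring
  rw [harg1, harg2] at expand
  rw [expand, ← Real.exp_add] at h2
  have goal_eq : Real.exp ((2*u)^2/8 + 2*τ*u) = Real.exp (2*τ*u + u^2/2) := by congr 1; ring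
  rw [goal_eq] at h2
  linarith

lemma chernoff_sum (d : ℕ) (τ lam : ℝ) (hτ0 : 0 ≤ τ) (hτ : τ ≤ 1/2) (hlam : 0 ≤ lam)
    (a : Fin d → ℝ) :
    ∑ s : Fin d → Bool,
      (∏ i, (if s i then 1/2 - τ else 1/2 + τ)) *
        (if 0 < ∑ i, (if s i then (-1:ℝ) else 1) * a i then (1:ℝ) else 0) ≤
      Real.exp (2 * τ * lam * (∑ i, a i) + lam ^ 2 * (∑ i, (a i)^2) / 2) := by
  have step1 : ∀ s : Fin d → Bool,
      (∏ i, (if s i then 1/2 - τ else 1/2 + τ)) *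
        (if 0 < ∑ i, (if s i then (-1:ℝ) else 1) * a i then (1:ℝ) else 0) ≤
      ∏ i, ((if s i then 1/2 - τ else 1/2 + τ) * Real.exp (lam * ((if s i then (-1:ℝ) else 1) * a i))) := by
    intro s
    rw [Finset.prod_mul_distrib, ← Real.exp_sum, ← Finset.mul_sum]
    apply mul_le_mul_of_nonneg_left
    · split_ifs with h
      · exact Real.one_le_exp (by positivity)
      · positivity
    · exact Finset.prod_nonneg (fun i _ => by split_ifs <;> linarith)
  calc ∑ s : Fin d → Bool, _ ≤ ∑ s : Fin d → Bool,
        ∏ i, ((if s i then 1/2 - τ else 1/2 + τ) * Real.exp (lam * ((if s i then (-1:ℝ) else 1) * a i))) :=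
        Finset.sum_le_sum (fun s _ => step1 s)
    _ = ∏ i, ∑ b : Bool, ((if b then 1/2 - τ else 1/2 + τ) * Real.exp (lam * ((if b then (-1:ℝ) else 1) * a i))) := by
        rw [Finset.prod_univ_sum]
        rw [← Fintype.piFinset_univ]
    _ ≤ ∏ i, Real.exp (2 * τ * (lam * a i) + (lam * a i) ^ 2 / 2) := by
        apply Finset.prod_le_prod
        · intro i _
          apply Finset.sum_nonneg
          intro b _
          split_ifs <;> exact mul_nonneg (by linarith) (Real.exp_pos _).le
        · intro i _
          have := hoeff_step τ (lam * a i) hτ0 hτ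
          simp only [Fintype.sum_bool, if_true, if_false]
          calc (1/2 - τ) * Real.exp (lam * (-1 * a i)) + (1/2 + τ) * Real.exp (lam * (1 * a i))
              = (1/2 - τ) * Real.exp (-(lam * a i)) + (1/2 + τ) * Real.exp (lam * a i) := by
                ring_nf
            _ ≤ _ := this
    _ = Real.exp (2 * τ * lam * (∑ i, a i) + lam ^ 2 * (∑ i, (a i)^2) / 2) := by
        rw [← Real.exp_sum]
        congr 1
        rw [Finset.mul_sum, Finset.mul_sum, Finset.sum_div, ← Finset.sum_add_distrib]
        apply Finset.sum_congr rfl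
        intro i _
        ring

open Classical in
lemma main_bound (d : ℕ) (τ ρ K : ℝ) (hτ0 : 0 ≤ τ) (hτ : τ ≤ 1/2) (hρ : 0 < ρ)
    (a : Fin d → ℝ) (hM : ∑ i, a i < 0) (hV : 0 < ∑ i, (a i)^2) :
    ∑ yb : Bool, ∑ s : Fin d → Bool,
      ((1/2) * ∏ i, (if s i then 1/2 - τ else 1/2 + τ)) *
        (if 0 < (if yb then (1:ℝ) else -1) * K
            + ρ * ∑ i, (if s i then (-1:ℝ) else 1) * a i then (1:ℝ) else 0) ≤
      1/2 + 1/2 * Real.exp (-2 * τ^2 * (∑ i, a i)^2 / (∑ i, (a i)^2)) := by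
  set w : (Fin d → Bool) → ℝ := fun s => ∏ i, (if s i then 1/2 - τ else 1/2 + τ) with hw
  have hw0 : ∀ s, 0 ≤ w s := fun s => Finset.prod_nonneg (fun i _ => by split_ifs <;> linarith)
  set T : (Fin d → Bool) → ℝ := fun s => ∑ i, (if s i then (-1:ℝ) else 1) * a i with hT
  have hsum_w : ∑ s : Fin d → Bool, w s = 1 := by
    have h1 : ∑ s : Fin d → Bool, w s
        = ∏ i : Fin d, ∑ b : Bool, (if b then 1/2 - τ else 1/2 + τ) := by
      rw [hw, Finset.prod_univ_sum, Fintype.piFinset_univ]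
    rw [h1]
    have : ∀ i : Fin d, (∑ b : Bool, (if b then 1/2 - τ else 1/2 + τ)) = (1:ℝ) := by
      intro i; rw [Fintype.sum_bool]; norm_num
    rw [Finset.prod_congr rfl (fun i _ => this i), Finset.prod_const_one]
  have key2 : ∀ s : Fin d → Bool,
      (if 0 < (1:ℝ) * K + ρ * T s then (1:ℝ) else 0)
        + (if 0 < (-1:ℝ) * K + ρ * T s then (1:ℝ) else 0)
      ≤ 1 + (if 0 < T s then (1:ℝ) else 0) := by
    intro s
    by_cases hTs : 0 < T s
    · simp only [hTs, if_true]; split_ifs <;> norm_num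
    · have h1 : ρ * T s ≤ 0 := mul_nonpos_of_nonneg_of_nonpos hρ.le (not_lt.mp hTs)
      simp only [hTs, if_false]
      split_ifs with h2 h3 <;> try norm_num
      all_goals linarith
  -- chernoff
  set M := ∑ i, a i with hMdef
  set V := ∑ i, (a i)^2 with hVdef
  set lam : ℝ := -2 * τ * M / V with hlamdef
  have hlam : 0 ≤ lam := by
    apply div_nonneg _ hV.le
    nlinarith
  have hcher : ∑ s : Fin d → Bool, w s * (if 0 < T s then (1:ℝ) else 0)
      ≤ Real.exp (-2 * τ^2 * M^2 / V) := by
    have h := chernoff_sum d τ lam hτ0 hτ hlam a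
    have hexp_eq : 2 * τ * lam * M + lam ^ 2 * V / 2 = -2 * τ^2 * M^2 / V := by
      rw [hlamdef]; field_simp; ring
    calc ∑ s : Fin d → Bool, w s * (if 0 < T s then (1:ℝ) else 0)
        = ∑ s : Fin d → Bool,
          (∏ i, (if s i then 1/2 - τ else 1/2 + τ)) *
            (if 0 < ∑ i, (if s i then (-1:ℝ) else 1) * a i then (1:ℝ) else 0) := rfl
      _ ≤ Real.exp (2 * τ * lam * M + lam ^ 2 * V / 2) := h
      _ = Real.exp (-2 * τ^2 * M^2 / V) := by rw [hexp_eq]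
  rw [Fintype.sum_bool]
  have hexpand : ∀ s : Fin d → Bool,
      ((1/2) * w s) * (if 0 < (if true then (1:ℝ) else -1) * K + ρ * T s then (1:ℝ) else 0)
        + ((1/2) * w s) * (if 0 < (if false then (1:ℝ) else -1) * K + ρ * T s then (1:ℝ) else 0)
      ≤ (1/2) * w s + (1/2) * (w s * (if 0 < T s then (1:ℝ) else 0)) := by
    intro s
    have h := key2 s
    have hw' := hw0 s
    norm_num [Bool.false_eq_true] at h ⊢
    split_ifs at h ⊢ <;> nlinarith [hw']
  calc (∑ s : Fin d → Bool, ((1/2) * w s) *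
          (if 0 < (if true then (1:ℝ) else -1) * K + ρ * T s then (1:ℝ) else 0))
        + (∑ s : Fin d → Bool, ((1/2) * w s) *
          (if 0 < (if false then (1:ℝ) else -1) * K + ρ * T s then (1:ℝ) else 0))
      = ∑ s : Fin d → Bool, (((1/2) * w s) *
          (if 0 < (if true then (1:ℝ) else -1) * K + ρ * T s then (1:ℝ) else 0)
        + ((1/2) * w s) *
          (if 0 < (if false then (1:ℝ) else -1) * K + ρ * T s then (1:ℝ) else 0)) := by
        rw [← Finset.sum_add_distrib]
    _ ≤ ∑ s : Fin d → Bool, ((1/2) * w s + (1/2) * (w s * (if 0 < T s then (1:ℝ) else 0))) :=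
        Finset.sum_le_sum (fun s _ => hexpand s)
    _ = (1/2) * (∑ s : Fin d → Bool, w s)
        + (1/2) * (∑ s : Fin d → Bool, w s * (if 0 < T s then (1:ℝ) else 0)) := by
        rw [Finset.sum_add_distrib, ← Finset.mul_sum, ← Finset.mul_sum]
    _ ≤ 1/2 + 1/2 * Real.exp (-2 * τ^2 * M^2 / V) := by
        rw [hsum_w]
        have := hcher
        nlinarith

lemma relu_diff_pos {x y : ℝ} (h : 0 < relu x - relu y) : 0 < x - y := by
  unfold relu at h
  rcases le_or_gt x 0 with hx | hx
  · rw [max_eq_right hx] at h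
    have : max y 0 ≥ 0 := le_max_right y 0
    linarith
  · rw [max_eq_left hx.le] at h
    have : max y 0 ≥ y := le_max_left y 0
    linarith


/-- Let `v₁ ≠ v₋₁` and `N(z) = ψ(v₁ᵀz) − ψ(v₋₁ᵀz)`.  Let `m ∈ {±1}`, let `D` be a
`(φ, ρ, τ)`-Bernoulli distribution with `m · cos ∠(v₁ − v₋₁, φ) < 0`, and let `p` be arbitrary.
Then `P_{(x,y)∼D}{m y N(p + x) > 0} ≤ 1/2 + (1/2) exp(−2dτ² cos² ∠(v₁ − v₋₁, φ))`. -/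
theorem reprogramming_fails
    (d : ℕ) (v1 vm1 : Fin d → ℝ) (hv : v1 ≠ vm1)
    (m : ℝ) (hm : m = 1 ∨ m = -1)
    (φ : Fin d → ℝ) (hφ : ∀ i, φ i = 1 / Real.sqrt d ∨ φ i = -(1 / Real.sqrt d))
    (ρ τ : ℝ) (hρ : 0 < ρ) (hτ : 0 < τ) (hτ' : τ ≤ 1 / 2)
    (hang : m * (dotp (fun i => v1 i - vm1 i) φ /
        (norm2 (fun i => v1 i - vm1 i) * norm2 φ)) < 0)
    (p : Fin d → ℝ) :
    bernoulliModel d φ ρ τ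
        {xy | 0 < m * xy.2 * (relu (dotp v1 (fun i => p i + xy.1 i))
            - relu (dotp vm1 (fun i => p i + xy.1 i)))} ≤
      ENNReal.ofReal (1 / 2 + (1 / 2) * Real.exp (-2 * d * τ ^ 2 *
        (dotp (fun i => v1 i - vm1 i) φ /
          (norm2 (fun i => v1 i - vm1 i) * norm2 φ)) ^ 2)) := by
  classical
  rcases Nat.eq_zero_or_pos d with hd | hd
  · exfalso
    have h0 : dotp (fun i => v1 i - vm1 i) φ = 0 := by
      subst hd; simp [dotp]
    rw [h0] at hang; simp at hang
  -- notation
  set W : Fin d → ℝ := fun i => v1 i - vm1 i with hWdef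
  set A : ℝ := dotp W φ with hAdef
  have hd0 : (0:ℝ) < (d:ℝ) := by exact_mod_cast hd
  -- facts about φ
  have hφsq : ∀ i, (φ i)^2 = 1/(d:ℝ) := by
    intro i
    have hsd : Real.sqrt d ^ 2 = (d:ℝ) := Real.sq_sqrt hd0.le
    rcases hφ i with h | h <;> rw [h]
    · rw [div_pow, hsd]; norm_num
    · rw [neg_pow, div_pow, hsd]; norm_num
  have hφ1 : norm2 φ = 1 := by
    rw [norm2]
    have : ∑ i, (φ i)^2 = 1 := by
      rw [Finset.sum_congr rfl (fun i _ => hφsq i), Finset.sum_const, Finset.card_univ,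
        Fintype.card_fin, nsmul_eq_mul]
      field_simp
    rw [this, Real.sqrt_one]
  -- facts about W
  have hWne : ∃ i, W i ≠ 0 := by
    by_contra hc
    push_neg at hc
    apply hv
    funext i
    have := hc i
    simp only [hWdef] at this
    linarith
  set S2 : ℝ := ∑ i, (W i)^2 with hS2def
  have hS2 : 0 < S2 := by
    obtain ⟨i, hi⟩ := hWne
    have h1 : 0 < (W i)^2 := by positivity
    have h2 : (W i)^2 ≤ S2 := Finset.single_le_sum (fun j _ => sq_nonneg (W j)) (mem_univ i)
    linarith
  have hnw : 0 < norm2 W := Real.sqrt_pos.mpr hS2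
  have hnw2 : (norm2 W)^2 = S2 := Real.sq_sqrt (le_of_lt hS2)
  have hmA : m * A < 0 := by
    rw [hφ1, mul_one] at hang
    rw [← mul_div_assoc] at hang
    rcases div_neg_iff.mp hang with ⟨h1, h2⟩ | ⟨h1, h2⟩
    · linarith
    · exact h1
  have hm2 : m^2 = 1 := by rcases hm with h | h <;> rw [h] <;> norm_num
  -- the coordinate coefficients
  set a : Fin d → ℝ := fun i => m * W i * φ i with hadef
  have hMeq : ∑ i, a i = m * A := by
    rw [hAdef, dotp, Finset.mul_sum]
    exact Finset.sum_congr rfl (fun i _ => by rw [hadef]; ring)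
  have hVeq : ∑ i, (a i)^2 = S2 / d := by
    rw [hS2def, Finset.sum_div]
    refine Finset.sum_congr rfl (fun i _ => ?_)
    rw [hadef]
    simp only []
    rw [mul_pow, mul_pow, hm2, hφsq i]
    ring
  have hM : ∑ i, a i < 0 := by rw [hMeq]; exact hmA
  have hV : 0 < ∑ i, (a i)^2 := by rw [hVeq]; positivity
  set K : ℝ := m * dotp W p with hKdef
  set E : Set ((Fin d → ℝ) × ℝ) := {xy | 0 < m * xy.2 * (relu (dotp v1 (fun i => p i + xy.1 i))
            - relu (dotp vm1 (fun i => p i + xy.1 i)))} with hEdef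
  have hEmeas : MeasurableSet E := by
    have hc : Continuous (fun xy : (Fin d → ℝ) × ℝ => m * xy.2 *
        (relu (dotp v1 (fun i => p i + xy.1 i)) - relu (dotp vm1 (fun i => p i + xy.1 i)))) := by
      unfold relu dotp
      fun_prop
    exact measurableSet_lt measurable_const hc.measurable
  have happly : bernoulliModel d φ ρ τ E = ∑ yb : Bool, ∑ s : Fin d → Bool,
      ENNReal.ofReal (((1/2) * ∏ i, (if s i then 1/2 - τ else 1/2 + τ)) *
        (if ((fun i => (if s i then (-1:ℝ) else 1) * (if yb then (1:ℝ) else -1) * ρ * φ i),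
            (if yb then (1:ℝ) else -1)) ∈ E then (1:ℝ) else 0)) := by
    rw [bernoulliModel, Measure.finset_sum_apply]
    refine Finset.sum_congr rfl (fun yb _ => ?_)
    rw [Measure.finset_sum_apply]
    refine Finset.sum_congr rfl (fun s _ => ?_)
    rw [Measure.smul_apply, Measure.dirac_apply' _ hEmeas, smul_eq_mul]
    by_cases hmem : ((fun i => (if s i then (-1:ℝ) else 1) * (if yb then (1:ℝ) else -1) * ρ * φ i),
        (if yb then (1:ℝ) else -1)) ∈ E
    · rw [Set.indicator_apply, if_pos hmem, if_pos hmem]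
      simp
    · rw [Set.indicator_apply, if_neg hmem, if_neg hmem]
      simp
  have hcnn : ∀ s : Fin d → Bool, 0 ≤ (1/2 : ℝ) * ∏ i, (if s i then 1/2 - τ else 1/2 + τ) := by
    intro s
    apply mul_nonneg (by norm_num)
    exact Finset.prod_nonneg (fun i _ => by split_ifs <;> linarith)
  have htnn : ∀ (yb : Bool) (s : Fin d → Bool),
      0 ≤ ((1/2 : ℝ) * ∏ i, (if s i then 1/2 - τ else 1/2 + τ)) *
        (if ((fun i => (if s i then (-1:ℝ) else 1) * (if yb then (1:ℝ) else -1) * ρ * φ i),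
            (if yb then (1:ℝ) else -1)) ∈ E then (1:ℝ) else 0) := by
    intro yb s
    apply mul_nonneg (hcnn s)
    split_ifs <;> norm_num
  -- pointwise bound
  have hpoint : ∀ (yb : Bool) (s : Fin d → Bool),
      ((fun i => (if s i then (-1:ℝ) else 1) * (if yb then (1:ℝ) else -1) * ρ * φ i),
          (if yb then (1:ℝ) else -1)) ∈ E →
      0 < (if yb then (1:ℝ) else -1) * K + ρ * ∑ i, (if s i then (-1:ℝ) else 1) * a i := by
    intro yb s hmemE
    set y : ℝ := if yb then (1:ℝ) else -1 with hydef
    have hy2 : y * y = 1 := by rw [hydef]; split_ifs <;> norm_num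
    rw [hEdef] at hmemE
    simp only [Set.mem_setOf_eq] at hmemE
    set z : Fin d → ℝ := fun i => p i + (if s i then (-1:ℝ) else 1) * y * ρ * φ i with hzdef
    have hmemE' : 0 < m * y * (relu (dotp v1 z) - relu (dotp vm1 z)) := hmemE
    have heq : m * y * (dotp v1 z - dotp vm1 z)
        = y * K + ρ * ∑ i, (if s i then (-1:ℝ) else 1) * a i := by
      rw [hKdef]
      simp only [dotp, hadef, hWdef, hzdef, Finset.mul_sum, ← Finset.sum_sub_distrib,
        ← Finset.sum_add_distrib]
      refine Finset.sum_congr rfl (fun i _ => ?_)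
      linear_combination (m * (v1 i - vm1 i) * ρ * (if s i then (-1:ℝ) else 1) * φ i) * hy2
    have hkey : 0 < m * y * (dotp v1 z - dotp vm1 z) := by
      have hmy : m * y = 1 ∨ m * y = -1 := by
        rcases hm with h | h <;> rw [h, hydef] <;> split_ifs <;> norm_num
      rcases hmy with h | h
      · rw [h, one_mul] at hmemE' ⊢
        exact relu_diff_pos hmemE'
      · rw [h] at hmemE' ⊢
        have h2 : 0 < relu (dotp vm1 z) - relu (dotp v1 z) := by linarith
        have := relu_diff_pos h2
        linarith
    rw [heq] at hkey
    exact hkey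
  -- exponent identity
  have hexp2 : -2*τ^2*(∑ i, a i)^2/(∑ i, (a i)^2)
      = -2*(d:ℝ)*τ^2*(A/(norm2 W * norm2 φ))^2 := by
    rw [hMeq, hVeq, hφ1, mul_one, mul_pow, hm2, one_mul, div_pow, hnw2]
    field_simp [hS2.ne', ne_of_gt hd0]
  -- finish
  rw [happly]
  have hsum1 : ∀ yb : Bool, (∑ s : Fin d → Bool,
      ENNReal.ofReal (((1/2) * ∏ i, (if s i then 1/2 - τ else 1/2 + τ)) *
        (if ((fun i => (if s i then (-1:ℝ) else 1) * (if yb then (1:ℝ) else -1) * ρ * φ i),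
            (if yb then (1:ℝ) else -1)) ∈ E then (1:ℝ) else 0)))
      = ENNReal.ofReal (∑ s : Fin d → Bool,
        (((1/2) * ∏ i, (if s i then 1/2 - τ else 1/2 + τ)) *
        (if ((fun i => (if s i then (-1:ℝ) else 1) * (if yb then (1:ℝ) else -1) * ρ * φ i),
            (if yb then (1:ℝ) else -1)) ∈ E then (1:ℝ) else 0))) := by
    intro yb
    exact (ENNReal.ofReal_sum_of_nonneg (fun s _ => htnn yb s)).symm
  rw [Finset.sum_congr rfl (fun yb _ => hsum1 yb),
    ← ENNReal.ofReal_sum_of_nonneg (fun yb _ => Finset.sum_nonneg (fun s _ => htnn yb s))]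
  apply ENNReal.ofReal_le_ofReal
  calc ∑ yb : Bool, ∑ s : Fin d → Bool,
        (((1/2) * ∏ i, (if s i then 1/2 - τ else 1/2 + τ)) *
        (if ((fun i => (if s i then (-1:ℝ) else 1) * (if yb then (1:ℝ) else -1) * ρ * φ i),
            (if yb then (1:ℝ) else -1)) ∈ E then (1:ℝ) else 0))
      ≤ ∑ yb : Bool, ∑ s : Fin d → Bool,
        (((1/2) * ∏ i, (if s i then 1/2 - τ else 1/2 + τ)) *
        (if 0 < (if yb then (1:ℝ) else -1) * K
            + ρ * ∑ i, (if s i then (-1:ℝ) else 1) * a i then (1:ℝ) else 0)) := by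
        refine Finset.sum_le_sum (fun yb _ => Finset.sum_le_sum (fun s _ => ?_))
        apply mul_le_mul_of_nonneg_left _ (hcnn s)
        by_cases h1 : ((fun i => (if s i then (-1:ℝ) else 1) * (if yb then (1:ℝ) else -1) * ρ * φ i),
            (if yb then (1:ℝ) else -1)) ∈ E
        · rw [if_pos h1, if_pos (hpoint yb s h1)]
        · rw [if_neg h1]
          split_ifs <;> norm_num
    _ ≤ 1/2 + 1/2 * Real.exp (-2 * τ^2 * (∑ i, a i)^2 / (∑ i, (a i)^2)) :=
        main_bound d τ ρ K hτ.le hτ' hρ a hM hV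
    _ = 1/2 + 1/2 * Real.exp (-2*(d:ℝ)*τ^2*(A/(norm2 W * norm2 φ))^2) := by rw [hexp2]
end

section
/- Let g be a real centred Gaussian random variable with variance σ² > 0, let U > 0, and let f(u) = e^{−u²/2}/√(2π) denote the standard Gaussian density. Then E[max{g − U, 0}] = σ·f(U/σ) − U·P{g ≥ U}, and consequently E[max{g − U, 0}] ≤ σ·f(U/σ)·min{1, (σ/U)²}. -/
open MeasureTheory ProbabilityTheory

open Filter Set

-- derivative of the exponential part
lemma aux_exp_deriv (σ : ℝ) (hσ : 0 < σ) (x : ℝ) :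
    HasDerivAt (fun x : ℝ => Real.exp (-x ^ 2 / (2 * σ ^ 2)))
      (-(x / σ ^ 2) * Real.exp (-x ^ 2 / (2 * σ ^ 2))) x := by
  have h := (((hasDerivAt_pow 2 x).neg.div_const (2 * σ ^ 2)).exp)
  refine h.congr_deriv ?_
  simp only [Pi.neg_apply]
  field_simp
  ring

-- tendsto of exp part to 0
lemma aux_exp_tendsto (σ : ℝ) (hσ : 0 < σ) :
    Tendsto (fun x : ℝ => Real.exp (-x ^ 2 / (2 * σ ^ 2))) atTop (nhds 0) := by
  apply Real.tendsto_exp_atBot.comp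
  have h1 : Tendsto (fun x : ℝ => x ^ 2 / (2 * σ ^ 2)) atTop atTop :=
    (tendsto_pow_atTop two_ne_zero).atTop_div_const (by positivity)
  have := tendsto_neg_atBot_iff.mpr h1
  refine this.congr (fun x => by ring)

noncomputable def gpdf (σ x : ℝ) : ℝ :=
  (Real.sqrt (2 * Real.pi * σ ^ 2))⁻¹ * Real.exp (-x ^ 2 / (2 * σ ^ 2))

lemma gpdf_pos (σ : ℝ) (hσ : 0 < σ) (x : ℝ) : 0 < gpdf σ x := by
  unfold gpdf
  have : (0:ℝ) < 2 * Real.pi * σ ^ 2 := by positivity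
  positivity

lemma gpdf_eq (σ : ℝ) (hσ : 0 < σ) :
    gaussianPDFReal 0 (σ ^ 2).toNNReal = gpdf σ := by
  funext x
  rw [gaussianPDFReal, gpdf, Real.coe_toNNReal _ (sq_nonneg σ)]
  ring_nf

-- FTC 1 : first moment tail
lemma aux_ftc1 (σ U : ℝ) (hσ : 0 < σ) (hU : 0 < U) :
    ∫ x in Ioi U, x * gpdf σ x = σ ^ 2 * gpdf σ U := by
  have h := integral_Ioi_of_hasDerivAt_of_nonneg' (a := U)
      (g := fun x => -(σ ^ 2) * gpdf σ x) (g' := fun x => x * gpdf σ x) (l := 0)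
      (fun x _ => by
        have h := ((aux_exp_deriv σ hσ x).const_mul
          (-(σ ^ 2) * (Real.sqrt (2 * Real.pi * σ ^ 2))⁻¹))
        refine (h.congr_deriv ?_).congr_of_eventuallyEq (Filter.Eventually.of_forall fun y => ?_)
        · unfold gpdf; field_simp
        · unfold gpdf; ring)
      (fun x hx => by
        have := (gpdf_pos σ hσ x).le
        have hx0 : (0:ℝ) < x := hU.trans hx
        positivity)
      (by
        have := ((aux_exp_tendsto σ hσ).const_mul
          (-(σ ^ 2) * (Real.sqrt (2 * Real.pi * σ ^ 2))⁻¹))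
        simpa [gpdf, mul_assoc] using this)
  rw [h]; ring

lemma aux_integrableOn_ftc1 (σ U : ℝ) (hσ : 0 < σ) (hU : 0 < U) :
    IntegrableOn (fun x => x * gpdf σ x) (Ioi U) := by
  refine integrableOn_Ioi_deriv_of_nonneg' (g := fun x => -(σ ^ 2) * gpdf σ x) (l := 0)
      (fun x _ => by
        have h := ((aux_exp_deriv σ hσ x).const_mul
          (-(σ ^ 2) * (Real.sqrt (2 * Real.pi * σ ^ 2))⁻¹))
        refine (h.congr_deriv ?_).congr_of_eventuallyEq (Filter.Eventually.of_forall fun y => ?_)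
        · unfold gpdf; field_simp
        · unfold gpdf; ring)
      (fun x hx => by
        have := (gpdf_pos σ hσ x).le
        have hx0 : (0:ℝ) < x := hU.trans hx
        positivity)
      (by
        have := ((aux_exp_tendsto σ hσ).const_mul
          (-(σ ^ 2) * (Real.sqrt (2 * Real.pi * σ ^ 2))⁻¹))
        simpa [gpdf, mul_assoc] using this)

lemma integrable_gpdf (σ : ℝ) (hσ : 0 < σ) : Integrable (gpdf σ) := by
  rw [← gpdf_eq σ hσ]; exact integrable_gaussianPDFReal 0 _

lemma gpdf_deriv (σ : ℝ) (hσ : 0 < σ) (x : ℝ) :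
    HasDerivAt (gpdf σ) (-(x / σ ^ 2) * gpdf σ x) x := by
  have h := (aux_exp_deriv σ hσ x).const_mul (Real.sqrt (2 * Real.pi * σ ^ 2))⁻¹
  refine h.congr_deriv ?_
  unfold gpdf; ring

lemma aux_mills_deriv (σ : ℝ) (hσ : 0 < σ) (x : ℝ) (hx : x ≠ 0) :
    HasDerivAt (fun x => (σ ^ 4 * (x ^ 3)⁻¹ - σ ^ 2 * x⁻¹) * gpdf σ x)
      ((1 - 3 * σ ^ 4 / x ^ 4) * gpdf σ x) x := by
  have h3 : HasDerivAt (fun x : ℝ => (x ^ 3)⁻¹) (-((3:ℕ) * x ^ 2) / (x ^ 3) ^ 2) x :=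
    (hasDerivAt_pow 3 x).inv (pow_ne_zero 3 hx)
  have hbr := ((h3.const_mul (σ ^ 4)).sub ((hasDerivAt_inv hx).const_mul (σ ^ 2)))
  have h := hbr.mul (gpdf_deriv σ hσ x)
  refine h.congr_deriv ?_
  unfold gpdf
  simp only [Pi.sub_apply]
  field_simp
  ring

lemma aux_mills_tendsto (σ : ℝ) (hσ : 0 < σ) :
    Tendsto (fun x => (σ ^ 4 * (x ^ 3)⁻¹ - σ ^ 2 * x⁻¹) * gpdf σ x) atTop (nhds 0) := by
  have hbr : Tendsto (fun x : ℝ => σ ^ 4 * (x ^ 3)⁻¹ - σ ^ 2 * x⁻¹) atTop (nhds 0) := by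
    have h1 : Tendsto (fun x : ℝ => (x ^ 3)⁻¹) atTop (nhds 0) :=
      tendsto_inv_atTop_zero.comp (tendsto_pow_atTop three_ne_zero)
    have h2 : Tendsto (fun x : ℝ => x⁻¹) atTop (nhds 0) := tendsto_inv_atTop_zero
    have := (h1.const_mul (σ ^ 4)).sub (h2.const_mul (σ ^ 2))
    simpa using this
  have hp : Tendsto (gpdf σ) atTop (nhds 0) := by
    have := (aux_exp_tendsto σ hσ).const_mul (Real.sqrt (2 * Real.pi * σ ^ 2))⁻¹
    rw [mul_zero] at this; exact this
  simpa using hbr.mul hp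

lemma aux_mills_integrableOn (σ U : ℝ) (hσ : 0 < σ) (hU : 0 < U) :
    IntegrableOn (fun x => (1 - 3 * σ ^ 4 / x ^ 4) * gpdf σ x) (Ioi U) := by
  refine Integrable.mono' (g := fun x => (1 + 3 * σ ^ 4 / U ^ 4) * gpdf σ x)
    (((integrable_gpdf σ hσ).restrict).const_mul _) ?_ ?_
  · apply Measurable.aestronglyMeasurable
    unfold gpdf
    fun_prop
  · filter_upwards [ae_restrict_mem measurableSet_Ioi] with x hx
    have hxU : U < x := hx
    have hx0 : 0 < x := hU.trans hxU
    have hppos := gpdf_pos σ hσ x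
    have ht : 0 ≤ 3 * σ ^ 4 / x ^ 4 := by positivity
    have hle : 3 * σ ^ 4 / x ^ 4 ≤ 3 * σ ^ 4 / U ^ 4 := by
      gcongr
    rw [Real.norm_eq_abs, abs_mul, abs_of_pos hppos]
    have : |1 - 3 * σ ^ 4 / x ^ 4| ≤ 1 + 3 * σ ^ 4 / U ^ 4 := by
      rw [abs_sub_comm, abs_le]
      constructor <;> nlinarith
    nlinarith [hppos.le, abs_nonneg (1 - 3 * σ ^ 4 / x ^ 4)]

lemma aux_mills (σ U : ℝ) (hσ : 0 < σ) (hU : 0 < U) :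
    (σ ^ 2 / U - σ ^ 4 / U ^ 3) * gpdf σ U ≤ ∫ x in Ioi U, gpdf σ x := by
  have hint := integral_Ioi_of_hasDerivAt_of_tendsto' (a := U)
      (f := fun x => (σ ^ 4 * (x ^ 3)⁻¹ - σ ^ 2 * x⁻¹) * gpdf σ x)
      (f' := fun x => (1 - 3 * σ ^ 4 / x ^ 4) * gpdf σ x)
      (fun x hx => aux_mills_deriv σ hσ x (ne_of_gt (lt_of_lt_of_le hU hx)))
      (aux_mills_integrableOn σ U hσ hU) (aux_mills_tendsto σ hσ)
  have hmono : ∫ x in Ioi U, (1 - 3 * σ ^ 4 / x ^ 4) * gpdf σ x ≤ ∫ x in Ioi U, gpdf σ x := by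
    refine setIntegral_mono_on (aux_mills_integrableOn σ U hσ hU)
      ((integrable_gpdf σ hσ).restrict) measurableSet_Ioi (fun x hx => ?_)
    have hx0 : 0 < x := hU.trans hx
    have := (gpdf_pos σ hσ x).le
    nlinarith [div_nonneg (by positivity : (0:ℝ) ≤ 3 * σ ^ 4) (by positivity : (0:ℝ) ≤ x ^ 4)]
  rw [hint] at hmono
  have heq : 0 - (σ ^ 4 * (U ^ 3)⁻¹ - σ ^ 2 * U⁻¹) * gpdf σ U
      = (σ ^ 2 / U - σ ^ 4 / U ^ 3) * gpdf σ U := by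
    field_simp
    ring
  linarith [heq ▸ hmono]

/-- If `g` is a centred Gaussian with variance `σ² > 0` and `U > 0`, then
`E[max{g − U, 0}] = σ f(U/σ) − U P{g ≥ U}` and consequently
`E[max{g − U, 0}] ≤ σ f(U/σ) min{1, (σ/U)²}`, where `f` is the standard Gaussian density. -/
theorem gaussian_relu_shift_expectation
    (σ U : ℝ) (hσ : 0 < σ) (hU : 0 < U)
    (Ω : Type) (mΩ : MeasurableSpace Ω) (μ : Measure Ω) (hμ : IsProbabilityMeasure μ)
    (g : Ω → ℝ) (hgm : Measurable g)
    (hg : Measure.map g μ = gaussianReal 0 (σ ^ 2).toNNReal) :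
    (∫ ω, max (g ω - U) 0 ∂μ) =
        σ * (Real.exp (-(U / σ) ^ 2 / 2) / Real.sqrt (2 * Real.pi))
          - U * (μ {ω | U ≤ g ω}).toReal ∧
      (∫ ω, max (g ω - U) 0 ∂μ) ≤
        σ * (Real.exp (-(U / σ) ^ 2 / 2) / Real.sqrt (2 * Real.pi)) * min 1 ((σ / U) ^ 2) := by
  have hv : (σ ^ 2).toNNReal ≠ 0 := by
    rw [Ne, Real.toNNReal_eq_zero]
    push_neg
    positivity
  -- Step A: push forward
  have hE : (∫ ω, max (g ω - U) 0 ∂μ) = ∫ x, gpdf σ x * max (x - U) 0 := by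
    have hmeas : AEStronglyMeasurable (fun x : ℝ => max (x - U) 0)
        (Measure.map g μ) :=
      ((continuous_id.sub continuous_const).max continuous_const).aestronglyMeasurable
    rw [← integral_map hgm.aemeasurable hmeas, hg,
      gaussianReal_of_var_ne_zero 0 hv]
    simp only [gaussianPDF_def, ENNReal.ofReal]
    rw [integral_withDensity_eq_integral_smul
      ((measurable_gaussianPDFReal 0 (σ ^ 2).toNNReal).real_toNNReal)]
    congr 1
    funext x
    rw [NNReal.smul_def, Real.coe_toNNReal _ (gaussianPDFReal_nonneg _ _ x),
      gpdf_eq σ hσ, smul_eq_mul]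
  -- Step B: restrict to Ioi U
  have hE2 : (∫ x, gpdf σ x * max (x - U) 0) = ∫ x in Ioi U, gpdf σ x * (x - U) := by
    rw [← integral_indicator measurableSet_Ioi]
    congr 1
    funext x
    by_cases hx : U < x
    · have h1 := max_eq_left (by linarith : (0:ℝ) ≤ x - U)
      simp [Set.indicator, hx, h1]
    · push_neg at hx
      have h1 := max_eq_right (by linarith : x - U ≤ (0:ℝ))
      simp [Set.indicator, not_lt.mpr hx, h1]
  -- Step C: split
  have hsplit : (∫ x in Ioi U, gpdf σ x * (x - U))
      = σ ^ 2 * gpdf σ U - U * ∫ x in Ioi U, gpdf σ x := by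
    have hfun : (fun x => gpdf σ x * (x - U)) = fun x => x * gpdf σ x - U * gpdf σ x :=
      funext fun x => by ring
    rw [hfun, integral_sub (aux_integrableOn_ftc1 σ U hσ hU)
      (((integrable_gpdf σ hσ).restrict).const_mul U), aux_ftc1 σ U hσ hU,
      integral_const_mul]
  -- tail probability
  have htail : (μ {ω | U ≤ g ω}).toReal = ∫ x in Ioi U, gpdf σ x := by
    have hset : {ω | U ≤ g ω} = g ⁻¹' (Ici U) := rfl
    rw [hset, ← Measure.map_apply hgm measurableSet_Ici, hg,
      gaussianReal_apply_eq_integral 0 hv,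
      ENNReal.toReal_ofReal (setIntegral_nonneg measurableSet_Ici
        fun x _ => gaussianPDFReal_nonneg _ _ x),
      gpdf_eq σ hσ, integral_Ici_eq_integral_Ioi]
  -- constant identity
  have hA : σ ^ 2 * gpdf σ U
      = σ * (Real.exp (-(U / σ) ^ 2 / 2) / Real.sqrt (2 * Real.pi)) := by
    unfold gpdf
    rw [Real.sqrt_mul (by positivity) (σ ^ 2), Real.sqrt_sq hσ.le]
    have harg : -U ^ 2 / (2 * σ ^ 2) = -(U / σ) ^ 2 / 2 := by
      rw [div_pow]; field_simp
    rw [harg]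
    have hsq : (0:ℝ) < Real.sqrt (2 * Real.pi) := Real.sqrt_pos.mpr (by positivity)
    field_simp
  have hfirst : (∫ ω, max (g ω - U) 0 ∂μ)
      = σ * (Real.exp (-(U / σ) ^ 2 / 2) / Real.sqrt (2 * Real.pi))
        - U * (μ {ω | U ≤ g ω}).toReal := by
    rw [hE, hE2, hsplit, htail, hA]
  refine ⟨hfirst, ?_⟩
  rw [hfirst, htail, ← hA]
  set p := gpdf σ U with hp
  have hppos : 0 < p := gpdf_pos σ hσ U
  set I := ∫ x in Ioi U, gpdf σ x with hI
  have hInn : 0 ≤ I := setIntegral_nonneg measurableSet_Ioi fun x _ => (gpdf_pos σ hσ x).le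
  rcases le_total U σ with h | h
  · rw [min_eq_left]
    · nlinarith
    · have h1 : (1:ℝ) ≤ σ / U := (one_le_div hU).mpr h
      nlinarith
  · rw [min_eq_right]
    · have hm := aux_mills σ U hσ hU
      have key : U * ((σ ^ 2 / U - σ ^ 4 / U ^ 3) * p)
          = σ ^ 2 * p - σ ^ 2 * p * (σ / U) ^ 2 := by
        rw [div_pow]; field_simp
      nlinarith [mul_le_mul_of_nonneg_left hm hU.le]
    · have h1 : σ / U ≤ 1 := (div_le_one hU).mpr h
      have h0 : 0 ≤ σ / U := by positivity
      nlinarith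
end

section
/- Let g be a real centred Gaussian random variable with variance σ² > 0, let U > 0, set μ = E[ψ(g − U)] and X = ψ(g − U) − μ, where ψ(u) = max{u,0}. Then for every s ≥ 0, P{|g| ≥ s} ≥ (1 − 1/π)·P{|X| ≥ s}. -/
open MeasureTheory ProbabilityTheory Set Real Filter

lemma integral_Ioi_mul_exp_neg_mul_sq {b : ℝ} (hb : 0 < b) :
    ∫ r in Set.Ioi (0:ℝ), r * Real.exp (-b * r^2) = (2*b)⁻¹ := by
  have A : ∀ x : ℝ, HasDerivAt (fun x => -(2 * b)⁻¹ * Real.exp (-b * x ^ 2))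
      (x * Real.exp (-b * x ^ 2)) x := by
    intro x
    convert ((hasDerivAt_pow 2 x).const_mul (-b)).exp.const_mul (-(2 * b)⁻¹) using 1
    · rfl
    · rfl
    field_simp
    ring
  have B : Tendsto (fun y : ℝ ↦ -(2 * b)⁻¹ * Real.exp (-b * (y : ℝ) ^ 2))
      atTop (nhds (-(2 * b)⁻¹ * 0)) := by
    refine Tendsto.const_mul _ ?_
    exact Real.tendsto_exp_atBot.comp
      ((tendsto_pow_atTop two_ne_zero).const_mul_atTop_of_neg (neg_lt_zero.2 hb))
  have := integral_Ioi_of_hasDerivAt_of_tendsto' (a := (0:ℝ)) (fun x _ => A x)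
    (integrable_mul_exp_neg_mul_sq hb).integrableOn B
  rw [this]
  simp

/-- Let `g` be a centred Gaussian with variance `σ² > 0`, `U > 0`, and let
`μ₀ = E[ψ(g − U)]`, `X = ψ(g − U) − μ₀` where `ψ` is the ReLU.  Then for every `s ≥ 0`,
`P{|g| ≥ s} ≥ (1 − 1/π) P{|X| ≥ s}`. -/
theorem gaussian_relu_tail_comparison
    (σ U : ℝ) (hσ : 0 < σ) (hU : 0 < U)
    (Ω : Type) (mΩ : MeasurableSpace Ω) (μ : Measure Ω) (hμ : IsProbabilityMeasure μ)
    (g : Ω → ℝ) (hgm : Measurable g)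
    (hg : Measure.map g μ = gaussianReal 0 (σ ^ 2).toNNReal) :
    ∀ s : ℝ, 0 ≤ s →
      ENNReal.ofReal (1 - 1 / Real.pi) *
          μ {ω | s ≤ |max (g ω - U) 0 - ∫ ω', max (g ω' - U) 0 ∂μ|} ≤
        μ {ω | s ≤ |g ω|} := by
  intro s hs
  have hσ2 : (0:ℝ) < σ ^ 2 := by positivity
  set v : NNReal := (σ ^ 2).toNNReal with hv_def
  have hv : v ≠ 0 := by
    simp [hv_def, Real.toNNReal_eq_zero, not_le, hσ2, hσ.ne']
  have hvr : (v : ℝ) = σ ^ 2 := Real.coe_toNNReal _ hσ2.le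
  set γ : Measure ℝ := gaussianReal 0 v with hγ_def
  -- constants
  set c : ℝ := (Real.sqrt (2 * π * σ ^ 2))⁻¹ with hc_def
  have hc_pos : 0 < c := by
    rw [hc_def]
    positivity
  set b : ℝ := (2 * σ ^ 2)⁻¹ with hb_def
  have hb : 0 < b := by rw [hb_def]; positivity
  -- pdf formula
  have hpdf : ∀ x : ℝ, gaussianPDFReal 0 v x = c * Real.exp (-b * x ^ 2) := by
    intro x
    rw [gaussianPDFReal, hvr, hc_def, hb_def]
    ring_nf
  have hpdf_le : ∀ x : ℝ, gaussianPDFReal 0 v x ≤ c := by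
    intro x
    rw [hpdf x]
    nth_rewrite 2 [← mul_one c]
    refine mul_le_mul_of_nonneg_left ?_ hc_pos.le
    exact Real.exp_le_one_iff.mpr (by nlinarith [sq_nonneg x])
  -- the density as an NNReal function
  set d : ℝ → NNReal := fun x => (gaussianPDFReal 0 v x).toNNReal with hd_def
  have hd_meas : Measurable d := (measurable_gaussianPDFReal 0 v).real_toNNReal
  have hγ_eq : γ = volume.withDensity (fun x => (d x : ENNReal)) := by
    rw [hγ_def, gaussianReal_of_var_ne_zero 0 hv]
    rfl
  have hd_coe : ∀ x, (d x : ℝ) = gaussianPDFReal 0 v x := fun x =>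
    Real.coe_toNNReal _ (gaussianPDFReal_nonneg 0 v x)
  -- integrability of relu against γ
  have hdom : Integrable (fun x : ℝ => |x * Real.exp (-b * x ^ 2)|) :=
    (integrable_mul_exp_neg_mul_sq hb).abs
  have key_int : ∀ W : ℝ, 0 ≤ W →
      Integrable (fun x : ℝ => gaussianPDFReal 0 v x * max (x - W) 0) := by
    intro W hW
    refine Integrable.mono' (hdom.const_mul c) ?_ ?_
    · exact ((measurable_gaussianPDFReal 0 v).mul
        ((measurable_id.sub measurable_const).max measurable_const)).aestronglyMeasurable
    · refine Filter.Eventually.of_forall fun x => ?_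
      have h1 : max (x - W) 0 ≤ |x| := by
        rcases le_total (x - W) 0 with h | h
        · simp [max_eq_right h, abs_nonneg]
        · rw [max_eq_left h]
          have : x - W ≤ x := by linarith
          exact this.trans (le_abs_self x)
      have h2 : 0 ≤ max (x - W) 0 := le_max_right _ _
      rw [Real.norm_eq_abs, abs_of_nonneg (mul_nonneg (gaussianPDFReal_nonneg 0 v x) h2)]
      calc gaussianPDFReal 0 v x * max (x - W) 0
          ≤ c * Real.exp (-b * x ^ 2) * |x| := by
            rw [hpdf x]
            exact mul_le_mul_of_nonneg_left h1 (by positivity)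
        _ ≤ c * |x * Real.exp (-b * x ^ 2)| := by
            rw [abs_mul, abs_of_nonneg (Real.exp_nonneg _)]
            ring_nf
            exact le_refl _
  have hInt_γ : ∀ W : ℝ, 0 ≤ W → Integrable (fun x : ℝ => max (x - W) 0) γ := by
    intro W hW
    rw [hγ_eq, integrable_withDensity_iff_integrable_smul hd_meas]
    have : (fun x : ℝ => d x • max (x - W) 0)
        = fun x => gaussianPDFReal 0 v x * max (x - W) 0 := by
      funext x
      rw [NNReal.smul_def, smul_eq_mul, hd_coe]
    rw [this]
    exact key_int W hW
  -- integral identity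
  have hint_eq : ∀ W : ℝ, (∫ x, max (x - W) 0 ∂γ)
      = ∫ x, gaussianPDFReal 0 v x * max (x - W) 0 := by
    intro W
    rw [hγ_eq, integral_withDensity_eq_integral_smul hd_meas]
    congr 1
    funext x
    rw [NNReal.smul_def, smul_eq_mul, hd_coe]
  -- μ₀ and its bounds
  set μ₀ : ℝ := ∫ ω', max (g ω' - U) 0 ∂μ with hμ₀_def
  have hmap_int : μ₀ = ∫ x, max (x - U) 0 ∂γ := by
    rw [hμ₀_def, ← hg, integral_map hgm.aemeasurable]
    exact (continuous_id.sub continuous_const).max continuous_const |>.aestronglyMeasurable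
  have hμ₀_nonneg : 0 ≤ μ₀ := by
    rw [hmap_int]
    exact integral_nonneg fun x => le_max_right _ _
  have hμ₀_le : μ₀ ≤ c * σ ^ 2 := by
    rw [hmap_int, hint_eq U]
    have step1 : (∫ x, gaussianPDFReal 0 v x * max (x - U) 0)
        ≤ ∫ x, gaussianPDFReal 0 v x * max (x - 0) 0 :=
      integral_mono (key_int U hU.le) (key_int 0 le_rfl) (fun x => by
        refine mul_le_mul_of_nonneg_left ?_ (gaussianPDFReal_nonneg 0 v x)
        exact max_le_max (by linarith) le_rfl)
    have step2 : (∫ x, gaussianPDFReal 0 v x * max (x - 0) 0) = c * σ ^ 2 := by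
      have heq : (fun x : ℝ => gaussianPDFReal 0 v x * max (x - 0) 0)
          = Set.indicator (Set.Ioi 0) (fun x => c * (x * Real.exp (-b * x ^ 2))) := by
        funext x
        rw [hpdf x]
        by_cases hx : 0 < x
        · simp only [Set.indicator_apply, Set.mem_Ioi, if_pos hx, sub_zero,
            max_eq_left hx.le]
          ring
        · simp only [Set.indicator_apply, Set.mem_Ioi, if_neg hx, sub_zero,
            max_eq_right (le_of_not_gt hx), mul_zero]
      rw [heq, integral_indicator measurableSet_Ioi, integral_const_mul,
        integral_Ioi_mul_exp_neg_mul_sq hb, hb_def]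
      rw [mul_comm 2 (σ^2)]
      field_simp
    calc (∫ x, gaussianPDFReal 0 v x * max (x - U) 0) ≤ _ := step1
      _ = c * σ ^ 2 := step2
  -- the small-ball bound
  have hsmall : γ {x : ℝ | |x| < μ₀} ≤ ENNReal.ofReal (1 / π) := by
    have h1 : {x : ℝ | |x| < μ₀} = Set.Ioo (-μ₀) μ₀ := by
      ext x; simp [abs_lt]
    have h2 : γ (Set.Ioo (-μ₀) μ₀) = ∫⁻ x in Set.Ioo (-μ₀) μ₀, gaussianPDF 0 v x := by
      rw [hγ_def, gaussianReal_apply 0 hv]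
    have h3 : (∫⁻ x in Set.Ioo (-μ₀) μ₀, gaussianPDF 0 v x)
        ≤ ∫⁻ _ in Set.Ioo (-μ₀) μ₀, ENNReal.ofReal c := by
      refine lintegral_mono fun x => ?_
      exact ENNReal.ofReal_le_ofReal (hpdf_le x)
    have h4 : (∫⁻ _ in Set.Ioo (-μ₀) μ₀, ENNReal.ofReal c)
        = ENNReal.ofReal c * volume (Set.Ioo (-μ₀) μ₀) := by
      rw [lintegral_const, Measure.restrict_apply MeasurableSet.univ, Set.univ_inter]
    have h5 : volume (Set.Ioo (-μ₀) μ₀) = ENNReal.ofReal (2 * μ₀) := by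
      rw [Real.volume_Ioo]
      congr 1
      ring
    have h6 : c * (2 * μ₀) ≤ 1 / π := by
      have hc2 : c ^ 2 = (2 * π * σ ^ 2)⁻¹ := by
        rw [hc_def, ← Real.sqrt_inv, Real.sq_sqrt (by positivity)]
      have hπ := Real.pi_pos
      have h8 : 2 * c ^ 2 * σ ^ 2 = 1 / π := by
        rw [hc2]
        field_simp
      nlinarith [hμ₀_le, hc_pos, hσ2]
    calc γ {x : ℝ | |x| < μ₀} = γ (Set.Ioo (-μ₀) μ₀) := by rw [h1]
      _ ≤ ENNReal.ofReal c * ENNReal.ofReal (2 * μ₀) := by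
          rw [h2, ← h5]
          exact h3.trans (le_of_eq h4)
      _ = ENNReal.ofReal (c * (2 * μ₀)) := by
          rw [← ENNReal.ofReal_mul hc_pos.le]
      _ ≤ ENNReal.ofReal (1 / π) := ENNReal.ofReal_le_ofReal h6
  -- transfer events
  have hmap_set : ∀ S : Set ℝ, MeasurableSet S → μ (g ⁻¹' S) = γ S := by
    intro S hS
    rw [← hg, Measure.map_apply hgm hS]
  have hγprob : IsProbabilityMeasure γ := by
    rw [hγ_def]; infer_instance
  -- main case split
  rcases le_or_gt s μ₀ with hcase | hcase
  · -- s ≤ μ₀ : bound LHS by ofReal(1-1/π) and RHS from below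
    have hRHS : ENNReal.ofReal (1 - 1 / π) ≤ μ {ω | s ≤ |g ω|} := by
      have hset : {ω | s ≤ |g ω|} = g ⁻¹' {x : ℝ | s ≤ |x|} := rfl
      have hmeas : MeasurableSet {x : ℝ | s ≤ |x|} :=
        measurableSet_le measurable_const measurable_id.abs
      rw [hset, hmap_set _ hmeas]
      have hcompl : {x : ℝ | s ≤ |x|} = {x : ℝ | |x| < s}ᶜ := by
        ext x; simp [not_lt]
      have hmeas2 : MeasurableSet {x : ℝ | |x| < s} :=
        measurableSet_lt measurable_id.abs measurable_const
      rw [hcompl, measure_compl hmeas2 (measure_ne_top γ _), measure_univ]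
      have hmono : γ {x : ℝ | |x| < s} ≤ ENNReal.ofReal (1 / π) := by
        refine le_trans (measure_mono ?_) hsmall
        intro x hx
        exact lt_of_lt_of_le hx hcase
      calc ENNReal.ofReal (1 - 1 / π)
          = 1 - ENNReal.ofReal (1 / π) := by
            rw [ENNReal.ofReal_sub _ (by positivity), ENNReal.ofReal_one]
        _ ≤ 1 - γ {x : ℝ | |x| < s} := tsub_le_tsub le_rfl hmono
    calc ENNReal.ofReal (1 - 1 / π) * μ {ω | s ≤ |max (g ω - U) 0 - μ₀|}
        ≤ ENNReal.ofReal (1 - 1 / π) * 1 := by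
          exact mul_le_mul_right prob_le_one _
      _ = ENNReal.ofReal (1 - 1 / π) := mul_one _
      _ ≤ μ {ω | s ≤ |g ω|} := hRHS
  · -- μ₀ < s : event inclusion
    have hspos : 0 < s := lt_of_le_of_lt hμ₀_nonneg hcase
    have hsub : {ω | s ≤ |max (g ω - U) 0 - μ₀|} ⊆ {ω | s ≤ |g ω|} := by
      intro ω hω
      simp only [Set.mem_setOf_eq] at hω ⊢
      rcases le_or_gt (max (g ω - U) 0 - μ₀) 0 with h | h
      · rw [abs_of_nonpos h] at hω
        have : max (g ω - U) 0 ≤ μ₀ - s := by linarith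
        have h0 : (0:ℝ) ≤ max (g ω - U) 0 := le_max_right _ _
        linarith
      · rw [abs_of_pos h] at hω
        have h1 : s + μ₀ ≤ max (g ω - U) 0 := by linarith
        have h2 : max (g ω - U) 0 = g ω - U := by
          rcases max_cases (g ω - U) 0 with ⟨heq, _⟩ | ⟨heq, hle⟩
          · exact heq
          · exfalso; rw [heq] at h1; linarith
        rw [h2] at h1
        have : s ≤ g ω := by linarith
        exact this.trans (le_abs_self _)
    calc ENNReal.ofReal (1 - 1 / π) * μ {ω | s ≤ |max (g ω - U) 0 - μ₀|}
        ≤ 1 * μ {ω | s ≤ |max (g ω - U) 0 - μ₀|} := by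
          refine mul_le_mul_left ?_ _
          rw [← ENNReal.ofReal_one]
          refine ENNReal.ofReal_le_ofReal ?_
          have := Real.pi_pos
          have h1π : 0 < 1 / π := by positivity
          linarith
      _ = μ {ω | s ≤ |max (g ω - U) 0 - μ₀|} := one_mul _
      _ ≤ μ {ω | s ≤ |g ω|} := measure_mono hsub
end
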